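/- Assume k ≥ 3 and that the orbit masses satisfy π(O_1) ≤ … ≤ π(O_k) with π(O_k) > 1/2. Define the k×k matrix P̄ by: P̄(i,j) := 1 if i ≤ k−1 and j = k, P̄(i,j) := 0 if i ≤ k−1 and j ≤ k−1, P̄(k,j) := π(O_j)/π(O_k) for j ≤ k−1, and P̄(k,k) := 2 − 1/π(O_k). Then P̄ is a stochastic matrix, it is π̄-reversible (hence π̄-stationary) where π̄(i) := π(O_i), and its spectrum (set of eigenvalues over ℝ) equals {1, 0, 1 − 1/π(O_k)}. -/

import Mathlib

open Matrix Finset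

/-- Total mass of the orbit (block) `i` under `π`. -/
noncomputable def orbMass {n k : ℕ} (π : Fin n → ℝ) (part : Fin n → Fin k) (i : Fin k) : ℝ :=
  ∑ z ∈ Finset.univ.filter (fun z => part z = i), π z

/-- for `k ≥ 3` orbits with non-decreasing masses and
`π(O_k) > 1/2`, the star-type matrix `P̄` is stochastic, `π̄`-reversible (hence
`π̄`-stationary), and its spectrum is `{1, 0, 1 − 1/π(O_k)}`. -/
theorem stmt16 {n k : ℕ} (hn : 0 < n) (hk3 : 3 ≤ k)
    (π : Fin n → ℝ) (hπpos : ∀ x, 0 < π x) (hπsum : ∑ x, π x = 1)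
    (part : Fin n → Fin k) (hpart : Function.Surjective part)
    (hmono : ∀ i j : Fin k, i ≤ j → orbMass π part i ≤ orbMass π part j)
    (last : Fin k) (hlast : (last : ℕ) = k - 1)
    (hhalf : 1 / 2 < orbMass π part last)
    (Pb : Matrix (Fin k) (Fin k) ℝ)
    (hPb : ∀ i j : Fin k, Pb i j =
      if i ≠ last then (if j = last then 1 else 0)
      else (if j = last then 2 - 1 / orbMass π part last
            else orbMass π part j / orbMass π part last)) :
    ((∀ i j, 0 ≤ Pb i j) ∧ (∀ i, ∑ j, Pb i j = 1)) ∧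
      (∀ i j, orbMass π part i * Pb i j = orbMass π part j * Pb j i) ∧
      (∀ j, ∑ i, orbMass π part i * Pb i j = orbMass π part j) ∧
      spectrum ℝ Pb = ({1, 0, 1 - 1 / orbMass π part last} : Set ℝ) := by
  haveI : NeZero k := ⟨by omega⟩
  set μ : Fin k → ℝ := orbMass π part with hμ
  set m : ℝ := μ last with hmdef
  have hμpos : ∀ i, 0 < μ i := by
    intro i
    obtain ⟨x, hx⟩ := hpart i
    exact Finset.sum_pos (fun z _ => hπpos z) ⟨x, by simp [hx]⟩
  have hμsum : ∑ i, μ i = 1 := by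
    rw [hμ]
    unfold orbMass
    rw [Finset.sum_fiberwise Finset.univ part π, hπsum]
  have hm0 : 0 < m := hμpos last
  have hmne : m ≠ 0 := ne_of_gt hm0
  -- two distinct indices different from `last`
  have hcard : 1 < (Finset.univ.filter (fun i : Fin k => i ≠ last)).card := by
    have : (Finset.univ.filter (fun i : Fin k => i ≠ last)).card = k - 1 := by
      rw [Finset.filter_ne', Finset.card_erase_of_mem (Finset.mem_univ _), Finset.card_univ,
        Fintype.card_fin]
    omega
  obtain ⟨a, ha, b, hb, hab⟩ := Finset.one_lt_card.mp hcard
  rw [Finset.mem_filter] at ha hb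
  have han : a ≠ last := ha.2
  have hbn : b ≠ last := hb.2
  have hrest : ∑ j ∈ Finset.univ.erase last, μ j = 1 - m := by
    have := Finset.add_sum_erase Finset.univ μ (Finset.mem_univ last)
    rw [hμsum] at this
    linarith
  have hm1 : m < 1 := by
    have h1 : μ a ≤ ∑ j ∈ Finset.univ.erase last, μ j :=
      Finset.single_le_sum (f := μ) (fun j _ => (hμpos j).le)
        (Finset.mem_erase.mpr ⟨han, Finset.mem_univ a⟩)
    have := hμpos a
    linarith
  have hhalf' : (1:ℝ)/2 < m := hhalf
  -- explicit entries
  have hE1 : ∀ i, i ≠ last → Pb i last = 1 := by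
    intro i hi; rw [hPb]; simp [hi]
  have hE0 : ∀ i j, i ≠ last → j ≠ last → Pb i j = 0 := by
    intro i j hi hj; rw [hPb]; simp [hi, hj]
  have hEl : ∀ j, j ≠ last → Pb last j = μ j / m := by
    intro j hj; rw [hPb]; simp [hj]
  have hEll : Pb last last = 2 - 1/m := by
    rw [hPb]; simp
  -- row sums
  have hrow : ∀ i, ∑ j, Pb i j = 1 := by
    intro i
    by_cases hi : i = last
    · have h2 : ∀ j ∈ Finset.univ.erase last, Pb last j = μ j / m := by
        intro j hj
        rw [hEl j (Finset.mem_erase.mp hj).1]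
      rw [hi, ← Finset.add_sum_erase Finset.univ _ (Finset.mem_univ last), hEll,
        Finset.sum_congr rfl h2, ← Finset.sum_div, hrest]
      field_simp
      ring
    · have e : ∀ j, Pb i j = if j = last then 1 else 0 := by
        intro j
        by_cases hj : j = last
        · rw [hj, hE1 i hi]; simp
        · rw [hE0 i j hi hj]; simp [hj]
      rw [Finset.sum_congr rfl (fun j _ => e j), Finset.sum_ite_eq' Finset.univ last
        (fun _ => (1:ℝ))]
      simp
  -- nonnegativity
  have h2m : (0:ℝ) ≤ 2 - 1/m := by
    rw [sub_nonneg, div_le_iff₀ hm0]; linarith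
  have hnonneg : ∀ i j, 0 ≤ Pb i j := by
    intro i j
    by_cases hi : i = last
    · by_cases hj : j = last
      · rw [hi, hj, hEll]; exact h2m
      · rw [hi, hEl j hj]; exact div_nonneg (hμpos j).le hm0.le
    · by_cases hj : j = last
      · rw [hj, hE1 i hi]; exact zero_le_one
      · rw [hE0 i j hi hj]
  -- reversibility
  have hrev : ∀ i j, μ i * Pb i j = μ j * Pb j i := by
    intro i j
    by_cases hi : i = last <;> by_cases hj : j = last
    · rw [hi, hj]
    · rw [hi, hEl j hj, hE1 j hj]
      field_simp
      rw [hmdef]; ring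
    · rw [hj, hE1 i hi, hEl i hi]
      field_simp
      rw [hmdef]
    · rw [hE0 i j hi hj, hE0 j i hj hi]
      ring
  -- stationarity
  have hstat : ∀ j, ∑ i, μ i * Pb i j = μ j := by
    intro j
    calc ∑ i, μ i * Pb i j = ∑ i, μ j * Pb j i :=
          Finset.sum_congr rfl (fun i _ => hrev i j)
      _ = μ j * ∑ i, Pb j i := by rw [Finset.mul_sum]
      _ = μ j := by rw [hrow j, mul_one]
  refine ⟨⟨hnonneg, hrow⟩, hrev, hstat, ?_⟩
  -- spectrum characterization via eigenvectors
  have hchar : ∀ lam : ℝ, lam ∈ spectrum ℝ Pb ↔ ∃ v : Fin k → ℝ, v ≠ 0 ∧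
      Pb.mulVec v = lam • v := by
    intro lam
    rw [spectrum.mem_iff, Matrix.isUnit_iff_isUnit_det, isUnit_iff_ne_zero, not_not,
      ← Matrix.exists_mulVec_eq_zero_iff]
    have hmveq : ∀ v : Fin k → ℝ,
        (algebraMap ℝ (Matrix (Fin k) (Fin k) ℝ) lam - Pb).mulVec v
          = lam • v - Pb.mulVec v := by
      intro v
      rw [Matrix.sub_mulVec, Algebra.algebraMap_eq_smul_one, Matrix.smul_mulVec,
        Matrix.one_mulVec]
    constructor
    · rintro ⟨v, hv0, hv⟩
      rw [hmveq] at hv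
      exact ⟨v, hv0, (sub_eq_zero.mp hv).symm⟩
    · rintro ⟨v, hv0, hv⟩
      exact ⟨v, hv0, by rw [hmveq, hv, sub_self]⟩
  -- mulVec entries
  have hmv : ∀ (v : Fin k → ℝ) (i : Fin k), i ≠ last → Pb.mulVec v i = v last := by
    intro v i hi
    have e : ∀ j, Pb i j * v j = if j = last then v last else 0 := by
      intro j
      by_cases hj : j = last
      · rw [hj, hE1 i hi]; simp
      · rw [hE0 i j hi hj]; simp [hj]
    show ∑ j, Pb i j * v j = v last
    rw [Finset.sum_congr rfl (fun j _ => e j), Finset.sum_ite_eq' Finset.univ last]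
    simp
  have hmvlast : ∀ (v : Fin k → ℝ), Pb.mulVec v last
      = (2 - 1/m) * v last + ∑ j ∈ Finset.univ.erase last, (μ j / m) * v j := by
    intro v
    show ∑ j, Pb last j * v j = _
    rw [← Finset.add_sum_erase Finset.univ _ (Finset.mem_univ last), hEll]
    congr 1
    apply Finset.sum_congr rfl
    intro j hj
    rw [hEl j (Finset.mem_erase.mp hj).1]
  rw [Set.ext_iff]
  intro lam
  rw [hchar lam]
  simp only [Set.mem_insert_iff, Set.mem_singleton_iff]
  constructor
  · rintro ⟨v, hv0, hv⟩
    by_contra hcon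
    push_neg at hcon
    obtain ⟨h1, h0, hl0⟩ := hcon
    have hoff : ∀ i, i ≠ last → v i = v last / lam := by
      intro i hi
      have hhi := congrFun hv i
      rw [hmv v i hi] at hhi
      simp only [Pi.smul_apply, smul_eq_mul] at hhi
      rw [eq_div_iff h0]
      linear_combination -hhi
    have hvlast : v last ≠ 0 := by
      intro hvl
      apply hv0
      funext i
      by_cases hi : i = last
      · rw [hi]; simpa using hvl
      · rw [hoff i hi, hvl]; simp
    have hlasteq := congrFun hv last
    rw [hmvlast v] at hlasteq
    simp only [Pi.smul_apply, smul_eq_mul] at hlasteq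
    have hsum : ∑ j ∈ Finset.univ.erase last, (μ j / m) * v j
        = (1 - m) / m * (v last / lam) := by
      have e : ∀ j ∈ Finset.univ.erase last, (μ j / m) * v j = (μ j / m) * (v last / lam) := by
        intro j hj
        rw [hoff j (Finset.mem_erase.mp hj).1]
      rw [Finset.sum_congr rfl e, ← Finset.sum_mul, ← Finset.sum_div, hrest]
    rw [hsum] at hlasteq
    have e1 : ((2 - 1/m) + (1-m)/m/lam) * v last = lam * v last := by
      linear_combination hlasteq
    have e2 : (2 - 1/m) + (1-m)/m/lam = lam := mul_right_cancel₀ hvlast e1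
    have hfac : (lam - 1) * (lam - (1 - 1/m)) = 0 := by
      field_simp at e2 ⊢
      nlinarith [e2]
    rcases mul_eq_zero.mp hfac with h | h
    · exact h1 (by linarith)
    · exact hl0 (by linarith)
  · intro hlam
    rcases hlam with h | h | h
    · -- eigenvalue 1
      refine ⟨fun _ => 1, ?_, ?_⟩
      · intro h0
        have := congrFun h0 last
        simp at this
      · funext i
        rw [h]
        simp only [Pi.smul_apply, smul_eq_mul, one_mul]
        show ∑ j, Pb i j * 1 = 1
        simpa using hrow i
    · -- eigenvalue 0
      rw [h]
      set v : Fin k → ℝ := fun j => if j = a then μ b else if j = b then -(μ a) else 0 with hvdef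
      refine ⟨v, ?_, ?_⟩
      · intro h0
        have := congrFun h0 a
        simp only [hvdef, if_pos rfl, Pi.zero_apply] at this
        exact (ne_of_gt (hμpos b)) this
      · funext i
        simp only [Pi.smul_apply, zero_smul, Pi.zero_apply, smul_eq_mul, zero_mul]
        have hvl : v last = 0 := by
          rw [hvdef]; simp [Ne.symm han, Ne.symm hbn]
        by_cases hi : i = last
        · rw [hi, hmvlast v, hvl]
          have hsum : ∑ j ∈ Finset.univ.erase last, (μ j / m) * v j
              = (μ a / m) * μ b + (μ b / m) * (-(μ a)) := by
            have key : ∀ j, (μ j / m) * v j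
                = (if j = a then (μ a / m) * μ b else 0)
                  + (if j = b then (μ b / m) * (-(μ a)) else 0) := by
              intro j
              by_cases hja : j = a
              · rw [hja]; simp [hvdef, hab, Ne.symm hab]
              · by_cases hjb : j = b
                · rw [hjb]; simp [hvdef, hja, hab, Ne.symm hab]
                · simp [hvdef, hja, hjb]
            rw [Finset.sum_congr rfl (fun j _ => key j), Finset.sum_add_distrib,
              Finset.sum_ite_eq' _ a, Finset.sum_ite_eq' _ b]
            simp [Finset.mem_erase, han, hbn]
          rw [hsum]
          ring
        · rw [hmv v i hi, hvl]
    · -- eigenvalue 1 - 1/m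
      rw [h]
      set v : Fin k → ℝ := fun j => if j = last then (m - 1)/m else 1 with hvdef
      refine ⟨v, ?_, ?_⟩
      · intro h0
        have := congrFun h0 a
        simp only [hvdef, if_neg han, Pi.zero_apply] at this
        exact one_ne_zero this
      · funext i
        have hvl : v last = (m - 1)/m := by rw [hvdef]; simp
        simp only [Pi.smul_apply, smul_eq_mul]
        by_cases hi : i = last
        · rw [hi, hmvlast v, hvl]
          have hsum : ∑ j ∈ Finset.univ.erase last, (μ j / m) * v j = (1 - m)/m := by
            have e : ∀ j ∈ Finset.univ.erase last, (μ j / m) * v j = μ j / m := by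
              intro j hj
              rw [hvdef]
              simp [(Finset.mem_erase.mp hj).1]
            rw [Finset.sum_congr rfl e, ← Finset.sum_div, hrest]
          rw [hsum]
          field_simp
          ring
        · rw [hmv v i hi, hvl, hvdef]
          simp only [if_neg hi]
          field_simp
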